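/- Let Y be a finite set, β > 0, π_ref a probability mass function on Y with π_ref(y) > 0 for all y. For r : Y → ℝ let Z(r) = ∑_{y∈Y} π_ref(y)·exp(r(y)/β) and π*_r(y) = π_ref(y)·exp(r(y)/β)/Z(r), and define V(r) = sup over probability mass functions π on Y of [∑_y π(y)r(y) − ∑_y π_ref(y)r(y) − β·KL(π ‖ π_ref)] (with KL(π‖π_ref) = +∞ when π is not absolutely continuous w.r.t. π_ref). Then V(r) = β·KL(π_ref ‖ π*_r) for every r : Y → ℝ, the supremum being attained at π = π*_r. Consequently, for every nonempty finite set S of reward functions r : Y → ℝ, min_{r ∈ S} V(r) = β·min_{r ∈ S} KL(π_ref ‖ π*_r), and any r̂ minimizing KL(π_ref ‖ π*_r) over r ∈ S yields a policy π*_{r̂} attaining the inner supremum for r̂. -/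

import Mathlib

/-- Kullback–Leibler divergence between pmfs on a finite set:
KL(p ‖ q) = ∑_{y : p(y) > 0} p(y) log(p(y)/q(y)). -/
noncomputable def klDiv {Y : Type*} [Fintype Y] (p q : Y → ℝ) : ℝ :=
  ∑ y, if 0 < p y then p y * Real.log (p y / q y) else 0

/-- The Gibbs policy induced by reward r at scale β relative to π_ref. -/
noncomputable def gibbsPolicy {Y : Type*} [Fintype Y] (β : ℝ) (πref : Y → ℝ)
    (r : Y → ℝ) (y : Y) : ℝ :=
  πref y * Real.exp (r y / β) / (∑ y', πref y' * Real.exp (r y' / β))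

/-- Gibbs' inequality: KL divergence is nonnegative. -/
lemma klDiv_nonneg' {Y : Type*} [Fintype Y] {p q : Y → ℝ}
    (hp : ∀ y, 0 ≤ p y) (hq : ∀ y, 0 < q y)
    (hps : ∑ y, p y = 1) (hqs : ∑ y, q y = 1) : 0 ≤ klDiv p q := by
  have h : ∀ y ∈ Finset.univ, p y - q y ≤
      (if 0 < p y then p y * Real.log (p y / q y) else 0) := by
    intro y _
    by_cases h : 0 < p y
    · simp only [if_pos h]
      have hl : Real.log (q y / p y) ≤ q y / p y - 1 :=
        Real.log_le_sub_one_of_pos (div_pos (hq y) h)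
      have h2 : Real.log (p y / q y) = - Real.log (q y / p y) := by
        rw [← Real.log_inv]; congr 1; field_simp
      have h3 : 1 - q y / p y ≤ Real.log (p y / q y) := by rw [h2]; linarith
      have h4 : p y * (1 - q y / p y) ≤ p y * Real.log (p y / q y) :=
        mul_le_mul_of_nonneg_left h3 h.le
      have h5 : p y * (1 - q y / p y) = p y - q y := by field_simp
      linarith
    · have hp0 : p y = 0 := le_antisymm (not_lt.1 h) (hp y)
      rw [if_neg h, hp0]
      linarith [hq y]
  calc (0:ℝ) = ∑ y, (p y - q y) := by rw [Finset.sum_sub_distrib, hps, hqs]; ring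
    _ ≤ klDiv p q := Finset.sum_le_sum h

theorem pessimistic_alignment_forward_kl {Y : Type*} [Fintype Y]
    (β : ℝ) (hβ : 0 < β)
    (πref : Y → ℝ) (href_pos : ∀ y, 0 < πref y) (href_sum : ∑ y, πref y = 1) :
    (∀ r : Y → ℝ,
      IsGreatest {v : ℝ | ∃ π : Y → ℝ, (∀ y, 0 ≤ π y) ∧ (∑ y, π y = 1) ∧
          v = (∑ y, π y * r y) - (∑ y, πref y * r y) - β * klDiv π πref}
        (β * klDiv πref (gibbsPolicy β πref r)) ∧
      (∑ y, gibbsPolicy β πref r y * r y) - (∑ y, πref y * r y)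
          - β * klDiv (gibbsPolicy β πref r) πref
        = β * klDiv πref (gibbsPolicy β πref r)) ∧
    (∀ (S : Finset (Y → ℝ)) (hS : S.Nonempty),
      S.inf' hS (fun r => β * klDiv πref (gibbsPolicy β πref r))
        = β * S.inf' hS (fun r => klDiv πref (gibbsPolicy β πref r))) := by
  have main : ∀ r : Y → ℝ,
      IsGreatest {v : ℝ | ∃ π : Y → ℝ, (∀ y, 0 ≤ π y) ∧ (∑ y, π y = 1) ∧
          v = (∑ y, π y * r y) - (∑ y, πref y * r y) - β * klDiv π πref}
        (β * klDiv πref (gibbsPolicy β πref r)) ∧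
      (∑ y, gibbsPolicy β πref r y * r y) - (∑ y, πref y * r y)
          - β * klDiv (gibbsPolicy β πref r) πref
        = β * klDiv πref (gibbsPolicy β πref r) := by
    intro r
    set Z : ℝ := ∑ y', πref y' * Real.exp (r y' / β) with hZ
    have hY : Nonempty Y := by
      by_contra h
      rw [not_nonempty_iff] at h
      rw [Finset.univ_eq_empty, Finset.sum_empty] at href_sum
      norm_num at href_sum
    have hZpos : 0 < Z := by
      apply Finset.sum_pos
      · intro y _; exact mul_pos (href_pos y) (Real.exp_pos _)
      · exact Finset.univ_nonempty
    set g : Y → ℝ := gibbsPolicy β πref r with hg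
    have hgdef : ∀ y, g y = πref y * Real.exp (r y / β) / Z := fun y => rfl
    have hgpos : ∀ y, 0 < g y := by
      intro y
      rw [hgdef]
      exact div_pos (mul_pos (href_pos y) (Real.exp_pos _)) hZpos
    have hgsum : ∑ y, g y = 1 := by
      simp only [hgdef]
      rw [← Finset.sum_div, ← hZ, div_self hZpos.ne']
    -- log of Gibbs ratio
    have hlog : ∀ y, Real.log (πref y / g y) = Real.log Z - r y / β := by
      intro y
      have h1 : πref y / g y = Z / Real.exp (r y / β) := by
        have hne1 : πref y ≠ 0 := (href_pos y).ne'
        have hne2 : Real.exp (r y / β) ≠ 0 := Real.exp_ne_zero _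
        rw [hgdef]
        field_simp
      rw [h1, Real.log_div hZpos.ne' (Real.exp_ne_zero _), Real.log_exp]
    -- value of KL(πref ‖ g)
    have hklref : klDiv πref g = Real.log Z - (∑ y, πref y * r y) / β := by
      unfold klDiv
      have : ∀ y ∈ Finset.univ, (if 0 < πref y then πref y * Real.log (πref y / g y) else 0)
          = πref y * Real.log Z - πref y * r y / β := by
        intro y _
        rw [if_pos (href_pos y), hlog y]; ring
      rw [Finset.sum_congr rfl this, Finset.sum_sub_distrib, ← Finset.sum_mul, href_sum,
        ← Finset.sum_div]
      ring
    -- key identity for any pmf π: klDiv π g = klDiv π πref - (∑ π r)/β + log Z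
    have key : ∀ π : Y → ℝ, (∀ y, 0 ≤ π y) → (∑ y, π y = 1) →
        klDiv π g = klDiv π πref - (∑ y, π y * r y) / β + Real.log Z := by
      intro π hπ hπs
      unfold klDiv
      have : ∀ y ∈ Finset.univ,
          (if 0 < π y then π y * Real.log (π y / g y) else 0)
          = (if 0 < π y then π y * Real.log (π y / πref y) else 0)
            - π y * r y / β + π y * Real.log Z := by
        intro y _
        by_cases h : 0 < π y
        · rw [if_pos h, if_pos h]
          have h1 : Real.log (π y / g y)
              = Real.log (π y / πref y) - r y / β + Real.log Z := by
            rw [Real.log_div h.ne' (hgpos y).ne', Real.log_div h.ne' (href_pos y).ne',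
              hgdef, Real.log_div (mul_pos (href_pos y) (Real.exp_pos _)).ne' hZpos.ne',
              Real.log_mul (href_pos y).ne' (Real.exp_ne_zero _), Real.log_exp]
            ring
          rw [h1]; ring
        · have hp0 : π y = 0 := le_antisymm (not_lt.1 h) (hπ y)
          rw [if_neg h, if_neg h, hp0]; ring
      rw [Finset.sum_congr rfl this]
      rw [Finset.sum_add_distrib, Finset.sum_sub_distrib, ← Finset.sum_div, ← Finset.sum_mul,
        hπs]
      ring
    -- value at the Gibbs policy
    have hklg : klDiv g πref = (∑ y, g y * r y) / β - Real.log Z := by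
      have := key g (fun y => (hgpos y).le) hgsum
      have hz : klDiv g g = 0 := by
        unfold klDiv
        apply Finset.sum_eq_zero
        intro y _
        rw [if_pos (hgpos y), div_self (hgpos y).ne', Real.log_one, mul_zero]
      rw [hz] at this
      linarith
    have attain : (∑ y, g y * r y) - (∑ y, πref y * r y) - β * klDiv g πref
        = β * klDiv πref g := by
      rw [hklg, hklref]
      field_simp
      ring
    refine ⟨⟨⟨g, fun y => (hgpos y).le, hgsum, attain.symm⟩, ?_⟩, attain⟩
    rintro v ⟨π, hπ, hπs, rfl⟩
    have hnn : 0 ≤ klDiv π g := klDiv_nonneg' hπ hgpos hπs hgsum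
    have hk := key π hπ hπs
    rw [hklref]
    have : (∑ y, π y * r y) / β - klDiv π πref ≤ Real.log Z := by linarith
    have h2 : (∑ y, π y * r y) - β * klDiv π πref ≤ β * Real.log Z := by
      have := mul_le_mul_of_nonneg_left this hβ.le
      rw [mul_sub, mul_div_cancel₀ _ hβ.ne'] at this
      linarith
    have h4 : β * (Real.log Z - (∑ y, πref y * r y) / β)
        = β * Real.log Z - ∑ y, πref y * r y := by
      rw [mul_sub, mul_div_cancel₀ _ hβ.ne']
    linarith
  refine ⟨main, ?_⟩
  intro S hS
  exact (Finset.apply_inf'_eq_inf'_comp hS _ (fun a b =>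
    mul_min_of_nonneg a b hβ.le)).symm
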